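/- Let Z be standard normal and let g(z) = max_i(a_i + b_i z) for a, b ∈ ℝ^L. Suppose indices j_1,...,j_ℓ and breakpoints −∞ = c_0 < c_1 < ... < c_{ℓ−1} < c_ℓ = ∞ are such that g(z) = a_{j_i} + b_{j_i} z for z ∈ [c_{i−1}, c_i], with b_{j_1} < ... < b_{j_ℓ} and c_i = (a_{j_i} − a_{j_{i+1}})/(b_{j_{i+1}} − b_{j_i}). Then E[g(Z)] = Σ_{i=1}^{ℓ} ( a_{j_i}(Φ(c_i) − Φ(c_{i−1})) + b_{j_i}(φ(c_{i−1}) − φ(c_i)) ). -/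

import Mathlib

open MeasureTheory ProbabilityTheory Real

/-- The standard normal pdf `φ`. -/
noncomputable def stdNormalPdf (z : ℝ) : ℝ := Real.exp (-z ^ 2 / 2) / Real.sqrt (2 * π)

/-- The standard normal cdf `Φ`. -/
noncomputable def stdNormalCdf (z : ℝ) : ℝ := ∫ t in Set.Iic z, stdNormalPdf t

open Set Filter Topology
open scoped NNReal ENNReal

lemma s17_pdf_eq : gaussianPDFReal 0 1 = stdNormalPdf := by
  funext x
  simp [gaussianPDFReal, stdNormalPdf, div_eq_inv_mul]

lemma s17_pdf_nonneg (x : ℝ) : 0 ≤ stdNormalPdf x :=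
  div_nonneg (Real.exp_pos _).le (Real.sqrt_nonneg _)

lemma s17_pdf_cont : Continuous stdNormalPdf :=
  (Real.continuous_exp.comp (by continuity)).div_const _

lemma s17_hasDeriv (x : ℝ) :
    HasDerivAt (fun z => -stdNormalPdf z) (x * stdNormalPdf x) x := by
  have h1 : HasDerivAt (fun z : ℝ => -z ^ 2 / 2) (-x) x := by
    have := ((hasDerivAt_pow 2 x).neg).div_const 2
    refine this.congr_deriv ?_
    simp; ring
  have h3 := (h1.exp.div_const (Real.sqrt (2 * π))).neg
  unfold stdNormalPdf
  refine h3.congr_deriv ?_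
  ring

lemma s17_integrable_pdf : Integrable stdNormalPdf := by
  rw [← s17_pdf_eq]; exact integrable_gaussianPDFReal 0 1

lemma s17_integrable_mul : Integrable (fun x : ℝ => x * stdNormalPdf x) := by
  have h := (integrable_mul_exp_neg_mul_sq (by norm_num : (0:ℝ) < 1/2)).div_const (Real.sqrt (2 * π))
  have he : (fun x : ℝ => x * stdNormalPdf x)
      = fun x => (x * Real.exp (-(1/2) * x ^ 2)) / Real.sqrt (2 * π) := by
    funext x; unfold stdNormalPdf; ring_nf
  rw [he]; exact h

lemma s17_integral_pdf : ∫ x, stdNormalPdf x = 1 := by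
  rw [← s17_pdf_eq]; exact integral_gaussianPDFReal_eq_one 0 one_ne_zero

lemma s17_tendsto_top : Tendsto stdNormalPdf atTop (𝓝 0) := by
  have h0 : Tendsto (fun x : ℝ => x ^ 2) atTop atTop := tendsto_pow_atTop (by norm_num)
  have h1 : Tendsto (fun x : ℝ => -x ^ 2 / 2) atTop atBot := by
    apply Tendsto.atBot_div_const (by norm_num : (0:ℝ) < 2)
    exact tendsto_neg_atBot_iff.mpr h0
  have h2 := (Real.tendsto_exp_atBot.comp h1).div_const (Real.sqrt (2 * π))
  exact (by simpa only [stdNormalPdf, Function.comp_def, zero_div] using h2 :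
    Tendsto (fun x => stdNormalPdf x) atTop (𝓝 0))

lemma s17_tendsto_bot : Tendsto stdNormalPdf atBot (𝓝 0) := by
  have h0 : Tendsto (fun x : ℝ => x ^ 2) atBot atTop := by
    have := (tendsto_pow_atTop (n := 2) (by norm_num)).comp tendsto_neg_atBot_atTop (α := ℝ)
    exact this.congr fun x => by simp [Function.comp_def]
  have h1 : Tendsto (fun x : ℝ => -x ^ 2 / 2) atBot atBot := by
    apply Tendsto.atBot_div_const (by norm_num : (0:ℝ) < 2)
    exact tendsto_neg_atBot_iff.mpr h0
  have h2 := (Real.tendsto_exp_atBot.comp h1).div_const (Real.sqrt (2 * π))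
  exact (by simpa only [stdNormalPdf, Function.comp_def, zero_div] using h2 :
    Tendsto (fun x => stdNormalPdf x) atBot (𝓝 0))

lemma s17_cdf_Ioc {r s : ℝ} (h : r ≤ s) :
    ∫ x in Set.Ioc r s, stdNormalPdf x = stdNormalCdf s - stdNormalCdf r := by
  have hu : ∫ x in Set.Iic r ∪ Set.Ioc r s, stdNormalPdf x
      = (∫ x in Set.Iic r, stdNormalPdf x) + ∫ x in Set.Ioc r s, stdNormalPdf x :=
    setIntegral_union (Set.Iic_disjoint_Ioc (le_refl r)) measurableSet_Ioc
      s17_integrable_pdf.integrableOn s17_integrable_pdf.integrableOn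
  rw [Set.Iic_union_Ioc_eq_Iic h] at hu
  rw [stdNormalCdf, stdNormalCdf, hu]; ring

lemma s17_cdf_Ioi (r : ℝ) :
    ∫ x in Set.Ioi r, stdNormalPdf x = 1 - stdNormalCdf r := by
  have hu : ∫ x in Set.Iic r ∪ Set.Ioi r, stdNormalPdf x
      = (∫ x in Set.Iic r, stdNormalPdf x) + ∫ x in Set.Ioi r, stdNormalPdf x :=
    setIntegral_union (Set.Iic_disjoint_Ioi (le_refl r)) measurableSet_Ioi
      s17_integrable_pdf.integrableOn s17_integrable_pdf.integrableOn
  rw [Set.Iic_union_Ioi, setIntegral_univ, s17_integral_pdf] at hu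
  rw [stdNormalCdf]; linarith

lemma s17_m_Iic (s : ℝ) : ∫ x in Set.Iic s, x * stdNormalPdf x = -stdNormalPdf s := by
  have := integral_Iic_of_hasDerivAt_of_tendsto' (a := s)
    (fun x _ => s17_hasDeriv x) s17_integrable_mul.integrableOn
    (by simpa using s17_tendsto_bot.neg)
  simpa using this

lemma s17_m_Ioi (r : ℝ) : ∫ x in Set.Ioi r, x * stdNormalPdf x = stdNormalPdf r := by
  have := integral_Ioi_of_hasDerivAt_of_tendsto' (a := r)
    (fun x _ => s17_hasDeriv x) s17_integrable_mul.integrableOn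
    (by simpa using s17_tendsto_top.neg)
  simpa using this

lemma s17_m_Ioc {r s : ℝ} (h : r ≤ s) :
    ∫ x in Set.Ioc r s, x * stdNormalPdf x = stdNormalPdf r - stdNormalPdf s := by
  have hu : ∫ x in Set.Iic r ∪ Set.Ioc r s, x * stdNormalPdf x
      = (∫ x in Set.Iic r, x * stdNormalPdf x) + ∫ x in Set.Ioc r s, x * stdNormalPdf x :=
    setIntegral_union (Set.Iic_disjoint_Ioc (le_refl r)) measurableSet_Ioc
      s17_integrable_mul.integrableOn s17_integrable_mul.integrableOn
  rw [Set.Iic_union_Ioc_eq_Iic h, s17_m_Iic, s17_m_Iic] at hu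
  linarith

lemma s17_m_univ : ∫ x, x * stdNormalPdf x = 0 := by
  have hu : ∫ x in Set.Iic 0 ∪ Set.Ioi (0:ℝ), x * stdNormalPdf x
      = (∫ x in Set.Iic (0:ℝ), x * stdNormalPdf x) + ∫ x in Set.Ioi (0:ℝ), x * stdNormalPdf x :=
    setIntegral_union (Set.Iic_disjoint_Ioi (le_refl (0:ℝ))) measurableSet_Ioi
      s17_integrable_mul.integrableOn s17_integrable_mul.integrableOn
  rw [Set.Iic_union_Ioi, setIntegral_univ, s17_m_Iic, s17_m_Ioi] at hu
  rw [hu]; ring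

lemma s17_pdf_fun_eq : gaussianPDF 0 1
    = fun x => ((Real.toNNReal (stdNormalPdf x) : ℝ≥0) : ℝ≥0∞) := by
  funext x; rw [gaussianPDF, s17_pdf_eq]; rfl

lemma s17_toNNReal_meas : Measurable fun x => Real.toNNReal (stdNormalPdf x) :=
  measurable_real_toNNReal.comp s17_pdf_cont.measurable

lemma s17_setIntegral (f : ℝ → ℝ) {s : Set ℝ} (hs : MeasurableSet s) :
    ∫ x in s, f x ∂(gaussianReal 0 1) = ∫ x in s, stdNormalPdf x * f x := by
  rw [gaussianReal_of_var_ne_zero 0 one_ne_zero, s17_pdf_fun_eq,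
    setIntegral_withDensity_eq_setIntegral_smul s17_toNNReal_meas f hs]
  congr 1; funext x
  rw [NNReal.smul_def, Real.coe_toNNReal _ (s17_pdf_nonneg x), smul_eq_mul]

lemma s17_integrable_affine (A B : ℝ) :
    Integrable (fun z => A + B * z) (gaussianReal 0 1) := by
  rw [gaussianReal_of_var_ne_zero 0 one_ne_zero, s17_pdf_fun_eq,
    integrable_withDensity_iff_integrable_smul s17_toNNReal_meas]
  refine ((s17_integrable_pdf.const_mul A).add (s17_integrable_mul.const_mul B)).congr ?_
  filter_upwards with x
  rw [NNReal.smul_def, Real.coe_toNNReal _ (s17_pdf_nonneg x), smul_eq_mul]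
  simp only [Pi.add_apply]
  ring

lemma s17_class_top (x : EReal) (hx : x ≠ ⊤) : x = ⊥ ∨ ∃ r : ℝ, x = (r : EReal) := by
  induction x using EReal.rec with
  | bot => exact Or.inl rfl
  | coe r => exact Or.inr ⟨r, rfl⟩
  | top => exact absurd rfl hx

lemma s17_class_bot (x : EReal) (hx : x ≠ ⊥) : x = ⊤ ∨ ∃ r : ℝ, x = (r : EReal) := by
  induction x using EReal.rec with
  | bot => exact absurd rfl hx
  | coe r => exact Or.inr ⟨r, rfl⟩
  | top => exact Or.inl rfl

/-- expectation of the piecewise-linear upper envelope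
`g(z) = max_i (a_i + b_i z)` against the standard normal density. With segments
`j_1,…,j_ℓ` and breakpoints `−∞ = c_0 < c_1 < … < c_{ℓ−1} < c_ℓ = ∞` (elements of the
extended reals) such that `g(z) = a_{j_i} + b_{j_i} z` on `[c_{i−1}, c_i]`, slopes
`b_{j_1} < … < b_{j_ℓ}`, and `c_i = (a_{j_i} − a_{j_{i+1}})/(b_{j_{i+1}} − b_{j_i})`, one
has `E[g(Z)] = Σ_{i=1}^{ℓ} ( a_{j_i}(Φ(c_i) − Φ(c_{i−1})) + b_{j_i}(φ(c_{i−1}) − φ(c_i)) )`,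
where `Φ`, `φ` are extended by `Φ(−∞)=0`, `Φ(∞)=1`, `φ(±∞)=0`. -/
theorem stmt17 (L ℓ : ℕ) (hℓ : 0 < ℓ) (a b : Fin L → ℝ)
    (g : ℝ → ℝ) (hg : ∀ z, g z = ⨆ i : Fin L, (a i + b i * z))
    (j : Fin ℓ → Fin L)
    (c : Fin (ℓ + 1) → EReal)
    (hc0 : c 0 = ⊥) (hcl : c (Fin.last ℓ) = ⊤) (hcmono : StrictMono c)
    (hseg : ∀ (i : Fin ℓ) (z : ℝ),
      c i.castSucc ≤ (z : EReal) → (z : EReal) ≤ c i.succ → g z = a (j i) + b (j i) * z)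
    (hbmono : StrictMono fun i => b (j i))
    (hbreak : ∀ (i : Fin (ℓ + 1)) (h1 : 0 < i.val) (h2 : i.val < ℓ),
      c i = (((a (j ⟨i.val - 1, by omega⟩) - a (j ⟨i.val, h2⟩)) /
        (b (j ⟨i.val, h2⟩) - b (j ⟨i.val - 1, by omega⟩)) : ℝ) : EReal))
    (Φe φe : EReal → ℝ)
    (hΦebot : Φe ⊥ = 0) (hΦetop : Φe ⊤ = 1) (hΦe : ∀ x : ℝ, Φe x = stdNormalCdf x)
    (hφebot : φe ⊥ = 0) (hφetop : φe ⊤ = 0) (hφe : ∀ x : ℝ, φe x = stdNormalPdf x) :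
    ∫ z, g z ∂(gaussianReal 0 1)
      = ∑ i : Fin ℓ,
          (a (j i) * (Φe (c i.succ) - Φe (c i.castSucc))
            + b (j i) * (φe (c i.castSucc) - φe (c i.succ))) := by
  classical
  set μ := gaussianReal 0 1 with hμ
  set S : Fin ℓ → Set ℝ :=
    fun i => {z : ℝ | c i.castSucc < (z : EReal) ∧ (z : EReal) ≤ c i.succ} with hS
  have hSmeas : ∀ i, MeasurableSet (S i) := by
    intro i
    have : S i = (fun z : ℝ => (z : EReal)) ⁻¹' (Set.Ioc (c i.castSucc) (c i.succ)) := rfl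
    rw [this]
    exact measurable_coe_real_ereal measurableSet_Ioc
  -- cover
  have hcover : (Set.univ : Set ℝ) = ⋃ i ∈ (Finset.univ : Finset (Fin ℓ)), S i := by
    ext z
    simp only [Set.mem_univ, true_iff, Set.mem_iUnion]
    set T : Finset (Fin (ℓ + 1)) := Finset.univ.filter (fun i => c i < (z : EReal)) with hT
    have h0T : (0 : Fin (ℓ + 1)) ∈ T := by
      simp only [hT, Finset.mem_filter, Finset.mem_univ, true_and, hc0]
      exact bot_lt_iff_ne_bot.mpr (by simp)
    have hne : T.Nonempty := ⟨0, h0T⟩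
    set m := T.max' hne with hmdef
    have hmT : m ∈ T := T.max'_mem hne
    have hm : c m < (z : EReal) := by
      simpa only [hT, Finset.mem_filter, Finset.mem_univ, true_and] using hmT
    have hmlt : m.val < ℓ := by
      by_contra h
      have hml : m = Fin.last ℓ := Fin.ext (by simp only [Fin.val_last]; omega)
      rw [hml, hcl] at hm
      exact not_top_lt hm
    refine ⟨⟨m.val, hmlt⟩, Finset.mem_univ _, ?_, ?_⟩
    · have he : (Fin.castSucc (⟨m.val, hmlt⟩ : Fin ℓ)) = m := Fin.ext rfl
      rw [he]; exact hm
    · by_contra h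
      push_neg at h
      have hmem : Fin.succ (⟨m.val, hmlt⟩ : Fin ℓ) ∈ T := by
        simp only [hT, Finset.mem_filter, Finset.mem_univ, true_and]
        exact h
      have := T.le_max' _ hmem
      rw [← hmdef] at this
      simp only [Fin.le_def, Fin.val_succ] at this
      omega
  -- disjointness
  have hdisj : ∀ i i' : Fin ℓ, i ≠ i' → Disjoint (S i) (S i') := by
    have key : ∀ i i' : Fin ℓ, i < i' → Disjoint (S i) (S i') := by
      intro i i' hlt
      rw [Set.disjoint_left]
      rintro z ⟨h1, h2⟩ ⟨h3, h4⟩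
      have hle : c i.succ ≤ c i'.castSucc := by
        apply hcmono.monotone
        simp only [Fin.le_def, Fin.val_succ, Fin.coe_castSucc]
        exact hlt
      exact absurd (h2.trans_lt (hle.trans_lt h3)) (lt_irrefl _)
    intro i i' h
    rcases h.lt_or_gt with h | h
    exacts [key _ _ h, (key _ _ h).symm]
  have hpq : ∀ i : Fin ℓ, c i.castSucc < c i.succ := fun i => hcmono Fin.castSucc_lt_succ
  have hEq : ∀ i : Fin ℓ, Set.EqOn g (fun z => a (j i) + b (j i) * z) (S i) := by
    intro i z hz
    exact hseg i z (le_of_lt hz.1) hz.2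
  have hint : ∀ i : Fin ℓ, IntegrableOn g (S i) μ := by
    intro i
    exact ((s17_integrable_affine (a (j i)) (b (j i))).integrableOn).congr_fun
      (hEq i).symm (hSmeas i)
  -- per-piece value
  have key : ∀ i : Fin ℓ,
      ∫ z in S i, g z ∂μ
        = a (j i) * (Φe (c i.succ) - Φe (c i.castSucc))
          + b (j i) * (φe (c i.castSucc) - φe (c i.succ)) := by
    intro i
    rw [setIntegral_congr_fun (hSmeas i) (hEq i), hμ, s17_setIntegral _ (hSmeas i)]
    have hsplit : ∫ z in S i, stdNormalPdf z * (a (j i) + b (j i) * z)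
        = a (j i) * (∫ z in S i, stdNormalPdf z)
          + b (j i) * ∫ z in S i, z * stdNormalPdf z := by
      rw [← integral_const_mul, ← integral_const_mul,
        ← integral_add ((s17_integrable_pdf.const_mul _).integrableOn)
          ((s17_integrable_mul.const_mul _).integrableOn)]
      congr 1; funext z; ring
    rw [hsplit]
    have hpne : c i.castSucc ≠ ⊤ := ((hpq i).trans_le le_top).ne
    have hqne : c i.succ ≠ ⊥ := (bot_le.trans_lt (hpq i)).ne'
    rcases s17_class_top _ hpne with hp | ⟨r, hp⟩ <;>
      rcases s17_class_bot _ hqne with hq | ⟨s, hq⟩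
    · -- p = ⊥, q = ⊤
      have hSu : S i = Set.univ := by
        ext z
        simp [hS, hp, hq, bot_lt_iff_ne_bot, le_top]
      rw [hSu, Measure.restrict_univ, s17_integral_pdf, s17_m_univ, hp, hq,
        hΦebot, hΦetop, hφebot, hφetop]
      ring
    · -- p = ⊥, q = s
      have hSu : S i = Set.Iic s := by
        ext z
        simp [hS, hp, hq, bot_lt_iff_ne_bot, EReal.coe_le_coe_iff]
      rw [hSu, s17_m_Iic, hp, hq, hΦebot, hφebot, hΦe, hφe]
      rw [show (∫ z in Set.Iic s, stdNormalPdf z) = stdNormalCdf s from rfl]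
      ring
    · -- p = r, q = ⊤
      have hSu : S i = Set.Ioi r := by
        ext z
        simp [hS, hp, hq, le_top, EReal.coe_lt_coe_iff]
      rw [hSu, s17_cdf_Ioi, s17_m_Ioi, hp, hq, hΦetop, hφetop, hΦe, hφe]
      ring
    · -- p = r, q = s
      have hrs : r ≤ s := by
        have := hpq i
        rw [hp, hq, EReal.coe_lt_coe_iff] at this
        exact this.le
      have hSu : S i = Set.Ioc r s := by
        ext z
        simp [hS, hp, hq, EReal.coe_lt_coe_iff, EReal.coe_le_coe_iff]
      rw [hSu, s17_cdf_Ioc hrs, s17_m_Ioc hrs, hp, hq, hΦe, hΦe, hφe, hφe]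
  calc ∫ z, g z ∂μ = ∫ z in Set.univ, g z ∂μ := by rw [Measure.restrict_univ]
    _ = ∫ z in ⋃ i ∈ (Finset.univ : Finset (Fin ℓ)), S i, g z ∂μ := by rw [← hcover]
    _ = ∑ i : Fin ℓ, ∫ z in S i, g z ∂μ :=
        integral_biUnion_finset _ (fun i _ => hSmeas i)
          (fun i _ i' _ h => hdisj i i' h) (fun i _ => hint i)
    _ = _ := Finset.sum_congr rfl fun i _ => key i
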